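/- In a convex quadrilateral Q = xyzw in the plane, if the interior angle at x plus the interior angle at y is at most π, then at least one of x, y is an endpoint of a diameter of Q (i.e., some pair of vertices of Q at maximal mutual distance includes x or y). -/

import Mathlib

open EuclideanGeometry Metric Set

noncomputable section

abbrev E2 := EuclideanSpace ℝ (Fin 2)

instance : Fact (Module.finrank ℝ E2 = 2) := ⟨finrank_euclideanSpace_fin⟩

instance : Module.Oriented ℝ E2 (Fin 2) :=
  ⟨Module.Basis.orientation ((EuclideanSpace.basisFun (Fin 2) ℝ).toBasis)⟩

private lemma ne12' {a b c : E2} (h : ¬ Collinear ℝ ({a, b, c} : Set E2)) : a ≠ b := by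
  rintro rfl
  exact h ((collinear_pair ℝ a c).subset (by intro u hu; simp only [Set.mem_insert_iff, Set.mem_singleton_iff] at hu ⊢; tauto))

private lemma ne23' {a b c : E2} (h : ¬ Collinear ℝ ({a, b, c} : Set E2)) : b ≠ c := by
  rintro rfl
  exact h ((collinear_pair ℝ a b).subset (by intro u hu; simp only [Set.mem_insert_iff, Set.mem_singleton_iff] at hu ⊢; tauto))

private lemma ne13' {a b c : E2} (h : ¬ Collinear ℝ ({a, b, c} : Set E2)) : a ≠ c := by
  rintro rfl
  exact h ((collinear_pair ℝ a b).subset (by intro u hu; simp only [Set.mem_insert_iff, Set.mem_singleton_iff] at hu ⊢; tauto))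

set_option maxHeartbeats 1000000 in
/-- In a convex quadrilateral `Q = xyzw` (vertices in convex position in this cyclic
order, so the diagonals `xz` and `yw` cross), if the interior angle at `x` plus the
interior angle at `y` is at most `π`, then `x` or `y` is an endpoint of a diameter
of `Q`. -/
theorem diametral_of_angle_sum_le_pi_quadrilateral
    (x y z w : E2)
    (hdiag : (openSegment ℝ x z ∩ openSegment ℝ y w).Nonempty)
    (h₁ : ¬ Collinear ℝ ({x, y, z} : Set E2))
    (h₂ : ¬ Collinear ℝ ({y, z, w} : Set E2))
    (h₃ : ¬ Collinear ℝ ({z, w, x} : Set E2))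
    (h₄ : ¬ Collinear ℝ ({w, x, y} : Set E2))
    (hang : ∠ w x y + ∠ x y z ≤ Real.pi) :
    ∃ p ∈ convexHull ℝ ({x, y, z, w} : Set E2),
      dist x p = Metric.diam (convexHull ℝ ({x, y, z, w} : Set E2)) ∨
      dist y p = Metric.diam (convexHull ℝ ({x, y, z, w} : Set E2)) := by
  obtain ⟨p, hpxz, hpyw⟩ := hdiag
  -- distinctness of vertices
  have hxy : x ≠ y := ne12' h₁
  have hxz : x ≠ z := ne13' h₁
  have hyz : y ≠ z := ne23' h₁
  have hyw : y ≠ w := ne13' h₂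
  have hzw : z ≠ w := ne23' h₂
  have hwx : w ≠ x := ne23' h₃
  -- the crossing point is strictly between on both diagonals
  have hpnex : p ≠ x := by rintro rfl; exact hxz (left_mem_openSegment_iff.1 hpxz)
  have hpnez : p ≠ z := by rintro rfl; exact hxz (right_mem_openSegment_iff.1 hpxz)
  have hpney : p ≠ y := by rintro rfl; exact hyw (left_mem_openSegment_iff.1 hpyw)
  have hpnew : p ≠ w := by rintro rfl; exact hyw (right_mem_openSegment_iff.1 hpyw)
  have sxpz : Sbtw ℝ x p z :=
    ⟨mem_segment_iff_wbtw.1 (openSegment_subset_segment ℝ x z hpxz), hpnex, hpnez⟩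
  have sypw : Sbtw ℝ y p w :=
    ⟨mem_segment_iff_wbtw.1 (openSegment_subset_segment ℝ y w hpyw), hpney, hpnew⟩
  -- oriented angle sum around the quadrilateral
  have haddx : ∡ w x z + ∡ z x y = ∡ w x y := oangle_add hwx hxz.symm (Ne.symm hxy)
  have haddz : ∡ y z x + ∡ x z w = ∡ y z w := oangle_add hyz hxz hzw.symm
  have tri1 : ∡ x y z + ∡ y z x + ∡ z x y = (Real.pi : Real.Angle) :=
    oangle_add_oangle_add_oangle_eq_pi (Ne.symm hxy) hyz.symm hxz
  have tri2 : ∡ x z w + ∡ z w x + ∡ w x z = (Real.pi : Real.Angle) :=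
    oangle_add_oangle_add_oangle_eq_pi hxz.symm hzw.symm (Ne.symm hwx)
  have hsum : ∡ w x y + ∡ x y z + ∡ y z w + ∡ z w x
      = (Real.pi : Real.Angle) + Real.pi := by
    have htt : (∡ x y z + ∡ y z x + ∡ z x y) + (∡ x z w + ∡ z w x + ∡ w x z)
        = (Real.pi : Real.Angle) + Real.pi := by rw [tri1, tri2]
    rw [← haddx, ← haddz, ← htt]; abel
  -- central angles at p all have the same sign σ
  set σ := (∡ x p y).sign with hσ
  have c1 : ∡ x p y + ∡ y p z = (Real.pi : Real.Angle) := by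
    rw [oangle_add hpnex.symm hpney.symm hpnez.symm]; exact sxpz.oangle₁₂₃_eq_pi
  have c2 : ∡ y p z + ∡ z p w = (Real.pi : Real.Angle) := by
    rw [oangle_add hpney.symm hpnez.symm hpnew.symm]; exact sypw.oangle₁₂₃_eq_pi
  have c3 : ∡ z p w + ∡ w p x = (Real.pi : Real.Angle) := by
    rw [oangle_add hpnez.symm hpnew.symm hpnex.symm]; exact sxpz.symm.oangle₁₂₃_eq_pi
  have s1 : (∡ y p z).sign = σ := by
    have : ∡ y p z = (Real.pi : Real.Angle) - ∡ x p y := by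
      rw [eq_sub_iff_add_eq, add_comm]; exact c1
    rw [this, Real.Angle.sign_pi_sub]
  have s2 : (∡ z p w).sign = σ := by
    have : ∡ z p w = (Real.pi : Real.Angle) - ∡ y p z := by
      rw [eq_sub_iff_add_eq, add_comm]; exact c2
    rw [this, Real.Angle.sign_pi_sub, s1]
  -- the four interior oriented angles all have sign -σ
  have sA : (∡ w x y).sign = -σ := by
    have e1 : (∡ w x p).sign = (∡ w x y).sign := Sbtw.oangle_sign_eq_left x sypw.symm
    have e2 : (∡ w x p).sign = (∡ p x y).sign := Sbtw.oangle_sign_eq x sypw.symm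
    have e3 : (∡ p x y).sign = (∡ y p x).sign := oangle_rotate_sign y p x
    have e4 : -(∡ x p y).sign = (∡ y p x).sign := oangle_swap₁₃_sign x p y
    rw [← e1, e2, e3, ← e4]
  have sB : (∡ x y z).sign = -σ := by
    have e1 : (∡ x y p).sign = (∡ x y z).sign :=
      Wbtw.oangle_sign_eq_of_ne_left y sxpz.wbtw hpnex.symm
    have e3 : (∡ y p x).sign = (∡ x y p).sign := oangle_rotate_sign x y p
    have e4 : -(∡ x p y).sign = (∡ y p x).sign := oangle_swap₁₃_sign x p y
    rw [← e1, ← e3, ← e4]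
  have sC : (∡ y z w).sign = -σ := by
    have e1 : (∡ y z p).sign = (∡ y z w).sign :=
      Wbtw.oangle_sign_eq_of_ne_left z sypw.wbtw hpney.symm
    have e3 : (∡ z p y).sign = (∡ y z p).sign := oangle_rotate_sign y z p
    have e4 : -(∡ y p z).sign = (∡ z p y).sign := oangle_swap₁₃_sign y p z
    rw [← e1, ← e3, ← e4, s1]
  have sD : (∡ z w x).sign = -σ := by
    have e1 : (∡ z w p).sign = (∡ z w x).sign :=
      Wbtw.oangle_sign_eq_of_ne_left w sxpz.symm.wbtw hpnez.symm
    have e3 : (∡ w p z).sign = (∡ z w p).sign := oangle_rotate_sign z w p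
    have e4 : -(∡ z p w).sign = (∡ w p z).sign := oangle_swap₁₃_sign z p w
    rw [← e1, ← e3, ← e4, s2]
  have hs0 : (∡ w x y).sign ≠ 0 := by
    intro h; exact h₄ (oangle_sign_eq_zero_iff_collinear.1 h)
  -- bounds on the unsigned angles
  have ha1 : 0 < ∠ w x y :=
    lt_of_le_of_ne (angle_nonneg _ _ _) (Ne.symm (angle_ne_zero_of_not_collinear h₄))
  have ha1' : ∠ w x y < Real.pi :=
    lt_of_le_of_ne (angle_le_pi _ _ _) (angle_ne_pi_of_not_collinear h₄)
  have ha2 : 0 < ∠ x y z :=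
    lt_of_le_of_ne (angle_nonneg _ _ _) (Ne.symm (angle_ne_zero_of_not_collinear h₁))
  have ha2' : ∠ x y z < Real.pi :=
    lt_of_le_of_ne (angle_le_pi _ _ _) (angle_ne_pi_of_not_collinear h₁)
  have ha3 : 0 < ∠ y z w :=
    lt_of_le_of_ne (angle_nonneg _ _ _) (Ne.symm (angle_ne_zero_of_not_collinear h₂))
  have ha3' : ∠ y z w < Real.pi :=
    lt_of_le_of_ne (angle_le_pi _ _ _) (angle_ne_pi_of_not_collinear h₂)
  have ha4 : 0 < ∠ z w x :=
    lt_of_le_of_ne (angle_nonneg _ _ _) (Ne.symm (angle_ne_zero_of_not_collinear h₃))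
  have ha4' : ∠ z w x < Real.pi :=
    lt_of_le_of_ne (angle_le_pi _ _ _) (angle_ne_pi_of_not_collinear h₃)
  have hπ : 0 < Real.pi := Real.pi_pos
  -- the unsigned angle sum is 2π
  have hS : ∠ w x y + ∠ x y z + ∠ y z w + ∠ z w x = 2 * Real.pi := by
    have hsgn : (∡ w x y).sign = 1 ∨ (∡ w x y).sign = -1 := by
      have : ∀ s : SignType, s ≠ 0 → s = 1 ∨ s = -1 := by decide
      exact this _ hs0
    rcases hsgn with hsgn | hsgn
    · have eA := oangle_eq_angle_of_sign_eq_one hsgn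
      have eB := oangle_eq_angle_of_sign_eq_one (sB.trans (sA.symm.trans hsgn))
      have eC := oangle_eq_angle_of_sign_eq_one (sC.trans (sA.symm.trans hsgn))
      have eD := oangle_eq_angle_of_sign_eq_one (sD.trans (sA.symm.trans hsgn))
      have hcoe : ((∠ w x y + ∠ x y z + ∠ y z w + ∠ z w x : ℝ) : Real.Angle)
          = ((Real.pi + Real.pi : ℝ) : Real.Angle) := by
        rw [Real.Angle.coe_add, Real.Angle.coe_add, Real.Angle.coe_add,
          Real.Angle.coe_add, ← eA, ← eB, ← eC, ← eD]
        exact hsum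
      obtain ⟨k, hk⟩ := Real.Angle.angle_eq_iff_two_pi_dvd_sub.1 hcoe
      have h2pi : (0:ℝ) < 2 * Real.pi := by positivity
      have hub : 2 * Real.pi * (k:ℝ) < 2 * Real.pi * 1 := by linarith
      have hlb : 2 * Real.pi * (-1:ℝ) < 2 * Real.pi * (k:ℝ) := by linarith
      have hk1' : k < 1 := by exact_mod_cast (mul_lt_mul_iff_right₀ h2pi).1 hub
      have hk2' : (-1 : ℤ) < k := by exact_mod_cast (mul_lt_mul_iff_right₀ h2pi).1 hlb
      have : k = 0 := by omega
      rw [this] at hk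
      push_cast at hk
      linarith
    · have eA := oangle_eq_neg_angle_of_sign_eq_neg_one hsgn
      have eB := oangle_eq_neg_angle_of_sign_eq_neg_one (sB.trans (sA.symm.trans hsgn))
      have eC := oangle_eq_neg_angle_of_sign_eq_neg_one (sC.trans (sA.symm.trans hsgn))
      have eD := oangle_eq_neg_angle_of_sign_eq_neg_one (sD.trans (sA.symm.trans hsgn))
      have hcoe : ((-(∠ w x y + ∠ x y z + ∠ y z w + ∠ z w x) : ℝ) : Real.Angle)
          = ((Real.pi + Real.pi : ℝ) : Real.Angle) := by
        rw [show (-(∠ w x y + ∠ x y z + ∠ y z w + ∠ z w x) : ℝ)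
            = (-(∠ w x y : ℝ)) + (-(∠ x y z : ℝ)) + (-(∠ y z w : ℝ)) + (-(∠ z w x : ℝ)) by ring]
        rw [Real.Angle.coe_add, Real.Angle.coe_add, Real.Angle.coe_add,
          Real.Angle.coe_neg, Real.Angle.coe_neg, Real.Angle.coe_neg, Real.Angle.coe_neg,
          ← eA, ← eB, ← eC, ← eD]
        exact hsum
      obtain ⟨k, hk⟩ := Real.Angle.angle_eq_iff_two_pi_dvd_sub.1 hcoe
      have h2pi : (0:ℝ) < 2 * Real.pi := by positivity
      have hub : 2 * Real.pi * (k:ℝ) < 2 * Real.pi * (-1 : ℝ) := by linarith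
      have hlb : 2 * Real.pi * (-3 : ℝ) < 2 * Real.pi * (k:ℝ) := by linarith
      have hk1' : k < -1 := by exact_mod_cast (mul_lt_mul_iff_right₀ h2pi).1 hub
      have hk2' : (-3 : ℤ) < k := by exact_mod_cast (mul_lt_mul_iff_right₀ h2pi).1 hlb
      have : k = -2 := by omega
      rw [this] at hk
      push_cast at hk
      linarith
  -- key inequality : dist z w ≤ dist x z or dist z w ≤ dist y w
  have key : dist z w ≤ dist x z ∨ dist z w ≤ dist y w := by
    rcases le_or_gt (Real.pi / 2) (∠ z w x) with hc | hc
    · left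
      have hcos : Real.cos (∠ z w x) ≤ 0 :=
        Real.cos_nonpos_of_pi_div_two_le_of_le hc (by linarith)
      have hlaw := law_cos z w x
      have hd : dist z w ≤ dist z x := by
        nlinarith [dist_nonneg (x := z) (y := w), dist_nonneg (x := x) (y := w),
          dist_nonneg (x := z) (y := x), mul_nonneg (dist_nonneg (x := z) (y := w))
            (dist_nonneg (x := x) (y := w))]
      rwa [dist_comm z x] at hd
    · right
      have hc' : Real.pi / 2 ≤ ∠ y z w := by linarith
      have hcos : Real.cos (∠ y z w) ≤ 0 :=
        Real.cos_nonpos_of_pi_div_two_le_of_le hc' (by linarith)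
      have hlaw := law_cos y z w
      have hd : dist w z ≤ dist y w := by
        nlinarith [dist_nonneg (x := y) (y := z), dist_nonneg (x := w) (y := z),
          dist_nonneg (x := y) (y := w), mul_nonneg (dist_nonneg (x := y) (y := z))
            (dist_nonneg (x := w) (y := z))]
      rwa [dist_comm w z] at hd
  -- assemble the conclusion
  set S : Set E2 := {x, y, z, w} with hSdef
  have hxS : x ∈ S := by simp [hSdef]
  have hyS : y ∈ S := by simp [hSdef]
  have hzS : z ∈ S := by simp [hSdef]
  have hwS : w ∈ S := by simp [hSdef]
  have hSfin : S.Finite := by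
    simp only [hSdef]
    exact (((Set.finite_singleton w).insert z).insert y).insert x
  have hbH : Bornology.IsBounded (convexHull ℝ S) :=
    isBounded_convexHull.2 hSfin.isBounded
  set D := Metric.diam (convexHull ℝ S) with hD
  have hmemH : ∀ a ∈ S, a ∈ convexHull ℝ S := fun a ha => subset_convexHull ℝ S ha
  have hdle : ∀ a ∈ S, ∀ b ∈ S, dist a b ≤ D := fun a ha b hb =>
    dist_le_diam_of_mem hbH (hmemH a ha) (hmemH b hb)
  set m := max (max (dist x y) (max (dist x z) (dist x w))) (max (dist y z) (dist y w))
    with hm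
  have hm0 : 0 ≤ m := le_trans dist_nonneg (le_trans (le_max_left _ _) (le_max_left _ _))
  have hmxy : dist x y ≤ m := le_trans (le_max_left _ _) (le_max_left _ _)
  have hmxz : dist x z ≤ m :=
    le_trans (le_trans (le_max_left _ _) (le_max_right _ _)) (le_max_left _ _)
  have hmxw : dist x w ≤ m :=
    le_trans (le_trans (le_max_right _ _) (le_max_right _ _)) (le_max_left _ _)
  have hmyz : dist y z ≤ m := le_trans (le_max_left _ _) (le_max_right _ _)
  have hmyw : dist y w ≤ m := le_trans (le_max_right _ _) (le_max_right _ _)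
  have hmzw : dist z w ≤ m := by
    rcases key with h | h
    · exact le_trans h hmxz
    · exact le_trans h hmyw
  have hDm : D ≤ m := by
    rw [hD, convexHull_diam]
    apply Metric.diam_le_of_forall_dist_le hm0
    intro a ha b hb
    simp only [hSdef, Set.mem_insert_iff, Set.mem_singleton_iff] at ha hb
    rcases ha with rfl | rfl | rfl | rfl <;> rcases hb with rfl | rfl | rfl | rfl <;>
      first
        | (rw [dist_self]; exact hm0)
        | exact hmxy
        | exact hmxz
        | exact hmxw
        | exact hmyz
        | exact hmyw
        | exact hmzw
        | (rw [dist_comm]; first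
            | exact hmxy
            | exact hmxz
            | exact hmxw
            | exact hmyz
            | exact hmyw
            | exact hmzw)
  -- m equals one of the five distances from x or y
  have : ∃ q ∈ S, m = dist x q ∨ m = dist y q := by
    rcases max_choice (max (dist x y) (max (dist x z) (dist x w)))
      (max (dist y z) (dist y w)) with h | h
    · rcases max_choice (dist x y) (max (dist x z) (dist x w)) with h' | h'
      · exact ⟨y, hyS, Or.inl (h.trans h')⟩
      · rcases max_choice (dist x z) (dist x w) with h'' | h''
        · exact ⟨z, hzS, Or.inl (h.trans (h'.trans h''))⟩
        · exact ⟨w, hwS, Or.inl (h.trans (h'.trans h''))⟩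
    · rcases max_choice (dist y z) (dist y w) with h' | h'
      · exact ⟨z, hzS, Or.inr (h.trans h')⟩
      · exact ⟨w, hwS, Or.inr (h.trans h')⟩
  obtain ⟨q, hqS, hq⟩ := this
  refine ⟨q, hmemH q hqS, ?_⟩
  rcases hq with hq | hq
  · exact Or.inl (le_antisymm (hdle x hxS q hqS) (le_trans hDm (le_of_eq hq)))
  · exact Or.inr (le_antisymm (hdle y hyS q hqS) (le_trans hDm (le_of_eq hq)))
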